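/- arXiv:2501.12763 — 3 statements merged into one kernel-verified Lean document; each statement's English description precedes it below -/
import Mathlib

section
/- Let (n_k)_{k≥1} be a super-lacunary sequence of positive integers, i.e. lim_{k→∞} n_{k+1}/n_k = ∞. Then for every fixed d ∈ ℕ there is a constant C = C(d, (n_k)) such that for every N ∈ ℕ and every choice of weights (c_{k,N})_{k≤N} with 0 ≤ c_{k,N} ≤ 1 one has L*(N,d) ≤ C, where L*(N,d) := sup_{c∈ℕ, c>0} Σ_{k,ℓ≤N} Σ_{1≤j,j'≤d} c_{k,N} c_{ℓ,N} 1[j·n_k − j'·n_ℓ = c] + Σ_{k,ℓ≤N, k≠ℓ} Σ_{1≤j,j'≤d} c_{k,N} c_{ℓ,N} 1[j·n_k − j'·n_ℓ = 0]. -/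
open MeasureTheory Filter Real Set Finset

/-- A sequence of positive integers is super-lacunary: n_{k+1}/n_k → ∞. -/
def IsSuperLacunary (n : ℕ → ℕ) : Prop :=
  Filter.Tendsto (fun k => (n (k + 1) : ℝ) / (n k : ℝ)) Filter.atTop Filter.atTop

private lemma sum_weight_le_card (N d : ℕ) (c : ℕ → ℝ) (hc : ∀ k, 0 ≤ c k ∧ c k ≤ 1)
    (P : ℕ × ℕ × ℕ × ℕ → Prop) [DecidablePred P] :
    (∑ k ∈ Finset.Icc 1 N, ∑ l ∈ Finset.Icc 1 N, ∑ j ∈ Finset.Icc 1 d,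
        ∑ j' ∈ Finset.Icc 1 d, c k * c l * (if P (k, l, j, j') then (1:ℝ) else 0))
    ≤ (((Finset.Icc 1 N ×ˢ Finset.Icc 1 N ×ˢ Finset.Icc 1 d ×ˢ Finset.Icc 1 d).filter P).card : ℝ) := by
  have h1 : (∑ k ∈ Finset.Icc 1 N, ∑ l ∈ Finset.Icc 1 N, ∑ j ∈ Finset.Icc 1 d,
        ∑ j' ∈ Finset.Icc 1 d, c k * c l * (if P (k, l, j, j') then (1:ℝ) else 0))
      ≤ ∑ k ∈ Finset.Icc 1 N, ∑ l ∈ Finset.Icc 1 N, ∑ j ∈ Finset.Icc 1 d,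
        ∑ j' ∈ Finset.Icc 1 d, (if P (k, l, j, j') then (1:ℝ) else 0) := by
    refine Finset.sum_le_sum fun k _ => Finset.sum_le_sum fun l _ =>
      Finset.sum_le_sum fun j _ => Finset.sum_le_sum fun j' _ => ?_
    split_ifs with h
    · rw [mul_one]
      nlinarith [(hc k).1, (hc k).2, (hc l).1, (hc l).2]
    · simp
  refine h1.trans_eq ?_
  rw [← Finset.sum_boole]
  simp only [Finset.sum_product]

private lemma card_bound (d K : ℕ) (s : Finset (ℕ × ℕ × ℕ × ℕ))
    (hmem : ∀ p ∈ s, 1 ≤ p.2.2.1 ∧ p.2.2.1 ≤ d ∧ 1 ≤ p.2.2.2 ∧ p.2.2.2 ≤ d)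
    (huniq : ∀ p ∈ s, ∀ q ∈ s, p.2.2.1 = q.2.2.1 → p.2.2.2 = q.2.2.2 →
      min p.1 K = min q.1 K → min p.2.1 K = min q.2.1 K → p = q) :
    s.card ≤ d * d * (K + 1) * (K + 1) := by
  have h := Finset.card_le_card_of_injOn
    (f := fun p : ℕ × ℕ × ℕ × ℕ => (p.2.2.1, p.2.2.2, min p.1 K, min p.2.1 K))
    (s := s)
    (t := Finset.Icc 1 d ×ˢ Finset.Icc 1 d ×ˢ Finset.range (K + 1) ×ˢ Finset.range (K + 1))
    (fun p hp => by
      obtain ⟨h1, h2, h3, h4⟩ := hmem p hp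
      simp only [Finset.mem_coe, Finset.mem_product, Finset.mem_Icc, Finset.mem_range]
      refine ⟨⟨h1, h2⟩, ⟨h3, h4⟩, ?_, ?_⟩ <;> omega)
    (fun p hp q hq he => by
      simp only [Prod.mk.injEq] at he
      exact huniq p (Finset.mem_coe.mp hp) q (Finset.mem_coe.mp hq)
        he.1 he.2.1 he.2.2.1 he.2.2.2)
  refine h.trans (le_of_eq ?_)
  simp [Finset.card_product, Nat.card_Icc]
  ring

private lemma uniq_inhom (n : ℕ → ℕ) (hpos : ∀ k, 0 < n k) (d K m : ℕ) (hm : 0 < m)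
    (grow : ∀ a b, K ≤ a → a < b → (2 * d + 2) * n a ≤ n b)
    (ninj : ∀ a b, K ≤ a → K ≤ b → n a = n b → a = b)
    (k l j j' k' l' : ℕ)
    (hj : 1 ≤ j) (hjd : j ≤ d) (hj' : 1 ≤ j') (hj'd : j' ≤ d)
    (e1 : j * n k = j' * n l + m) (e2 : j * n k' = j' * n l' + m)
    (hk : min k K = min k' K) (hl : min l K = min l' K) : k = k' ∧ l = l' := by
  -- bounds for a "both large" solution
  have bnds : ∀ a b, K ≤ a → K ≤ b → j * n a = j' * n b + m →
      m ≤ d * n a ∧ n a ≤ 2 * m := by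
    intro a b ha hb e
    have f1 : j * n a ≤ d * n a := Nat.mul_le_mul_right _ hjd
    have f1' : n a ≤ j * n a := Nat.le_mul_of_pos_left _ (by omega)
    have f2 : n b ≤ j' * n b := Nat.le_mul_of_pos_left _ (by omega)
    have f2' : j' * n b ≤ d * n b := Nat.mul_le_mul_right _ hj'd
    have hba : b ≤ a := by
      by_contra hcon
      push_neg at hcon
      have hg := grow a b ha hcon
      have := hpos a
      linarith
    refine ⟨by linarith, ?_⟩
    rcases Nat.lt_or_ge b a with hba' | hba'
    · have hg := grow b a hb hba'
      linarith
    · have hab : a = b := le_antisymm hba' hba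
      subst hab
      have hlt : j' * n a < j * n a := by linarith [hpos a]
      have hj'j : j' < j := lt_of_mul_lt_mul_right hlt (Nat.zero_le _)
      have f3 : (j' + 1) * n a ≤ j * n a := Nat.mul_le_mul_right _ (by omega)
      have := hpos a
      nlinarith
  by_cases hkK : k < K
  · have hk2 : k' = k := by omega
    subst hk2
    by_cases hlK : l < K
    · exact ⟨rfl, by omega⟩
    · have hl1 : K ≤ l := by omega
      have hl2 : K ≤ l' := by omega
      have hmul : j' * n l = j' * n l' := by linarith
      exact ⟨rfl, ninj l l' hl1 hl2 (Nat.eq_of_mul_eq_mul_left (by omega) hmul)⟩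
  · have hk1 : K ≤ k := by omega
    have hk2 : K ≤ k' := by omega
    by_cases hlK : l < K
    · have hl2 : l' = l := by omega
      subst hl2
      have hmul : j * n k = j * n k' := by linarith
      exact ⟨ninj k k' hk1 hk2 (Nat.eq_of_mul_eq_mul_left (by omega) hmul), rfl⟩
    · have hl1 : K ≤ l := by omega
      have hl2 : K ≤ l' := by omega
      have B1 := bnds k l hk1 hl1 e1
      have B2 := bnds k' l' hk2 hl2 e2
      have hkk' : k = k' := by
        rcases lt_trichotomy k k' with h | h | h
        · exfalso
          have hg := grow k k' hk1 h
          have := hpos k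
          linarith [B1.1, B2.2, Nat.zero_le (d * n k)]
        · exact h
        · exfalso
          have hg := grow k' k hk2 h
          have := hpos k'
          linarith [B2.1, B1.2, Nat.zero_le (d * n k')]
      subst hkk'
      have hmul : j' * n l = j' * n l' := by linarith
      exact ⟨rfl, ninj l l' hl1 hl2 (Nat.eq_of_mul_eq_mul_left (by omega) hmul)⟩

private lemma uniq_hom (n : ℕ → ℕ) (hpos : ∀ k, 0 < n k) (d K : ℕ)
    (grow : ∀ a b, K ≤ a → a < b → (2 * d + 2) * n a ≤ n b)
    (ninj : ∀ a b, K ≤ a → K ≤ b → n a = n b → a = b)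
    (k l j j' k' l' : ℕ)
    (hj : 1 ≤ j) (hjd : j ≤ d) (hj' : 1 ≤ j') (hj'd : j' ≤ d)
    (hne : k ≠ l)
    (e1 : j * n k = j' * n l) (e2 : j * n k' = j' * n l')
    (hk : min k K = min k' K) (hl : min l K = min l' K) : k = k' ∧ l = l' := by
  have impossible : ¬ (K ≤ k ∧ K ≤ l) := by
    rintro ⟨ha, hb⟩
    have f1 : j * n k ≤ d * n k := Nat.mul_le_mul_right _ hjd
    have f1' : n k ≤ j * n k := Nat.le_mul_of_pos_left _ (by omega)
    have f2 : n l ≤ j' * n l := Nat.le_mul_of_pos_left _ (by omega)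
    have f2' : j' * n l ≤ d * n l := Nat.mul_le_mul_right _ hj'd
    rcases lt_or_gt_of_ne hne with h | h
    · have hg := grow k l ha h
      have := hpos k
      linarith [Nat.zero_le (d * n k)]
    · have hg := grow l k hb h
      have := hpos l
      linarith [Nat.zero_le (d * n l)]
  by_cases hkK : k < K
  · have hk2 : k' = k := by omega
    subst hk2
    by_cases hlK : l < K
    · exact ⟨rfl, by omega⟩
    · have hl1 : K ≤ l := by omega
      have hl2 : K ≤ l' := by omega
      have hmul : j' * n l = j' * n l' := by linarith
      exact ⟨rfl, ninj l l' hl1 hl2 (Nat.eq_of_mul_eq_mul_left (by omega) hmul)⟩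
  · have hk1 : K ≤ k := by omega
    have hk2 : K ≤ k' := by omega
    by_cases hlK : l < K
    · have hl2 : l' = l := by omega
      subst hl2
      have hmul : j * n k = j * n k' := by linarith
      exact ⟨ninj k k' hk1 hk2 (Nat.eq_of_mul_eq_mul_left (by omega) hmul), rfl⟩
    · exact absurd ⟨hk1, by omega⟩ impossible

theorem superlacunary_bounded_diophantine
    (n : ℕ → ℕ) (hpos : ∀ k, 0 < n k) (hsuper : IsSuperLacunary n) (d : ℕ) :
    ∃ C : ℝ, ∀ N : ℕ, ∀ c : ℕ → ℝ, (∀ k, 0 ≤ c k ∧ c k ≤ 1) →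
      ∀ m : ℕ, 0 < m →
        (∑ k ∈ Finset.Icc 1 N, ∑ l ∈ Finset.Icc 1 N,
          ∑ j ∈ Finset.Icc 1 d, ∑ j' ∈ Finset.Icc 1 d,
            c k * c l * (if (j : ℤ) * n k - (j' : ℤ) * n l = (m : ℤ) then 1 else 0)) +
        (∑ k ∈ Finset.Icc 1 N, ∑ l ∈ Finset.Icc 1 N,
          ∑ j ∈ Finset.Icc 1 d, ∑ j' ∈ Finset.Icc 1 d,
            c k * c l * (if k ≠ l ∧ (j : ℤ) * n k - (j' : ℤ) * n l = 0 then 1 else 0))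
        ≤ C := by
  have h2d := hsuper.eventually_ge_atTop ((2 * d + 2 : ℕ) : ℝ)
  rw [Filter.eventually_atTop] at h2d
  obtain ⟨K, hK⟩ := h2d
  have hK' : ∀ k, K ≤ k → (2 * d + 2) * n k ≤ n (k + 1) := by
    intro k hk
    have h := hK k hk
    have hnk : (0 : ℝ) < n k := by exact_mod_cast hpos k
    rw [le_div_iff₀ hnk] at h
    exact_mod_cast h
  have mono : ∀ a b, K ≤ a → a ≤ b → n a ≤ n b := by
    intro a b ha hab
    induction b, hab using Nat.le_induction with
    | base => exact le_rfl
    | succ b hab ih =>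
      exact ih.trans ((Nat.le_mul_of_pos_left _ (by omega)).trans (hK' b (ha.trans hab)))
  have grow : ∀ a b, K ≤ a → a < b → (2 * d + 2) * n a ≤ n b := by
    intro a b ha hab
    exact (hK' a ha).trans (mono (a + 1) b (by omega) hab)
  have ninj : ∀ a b, K ≤ a → K ≤ b → n a = n b → a = b := by
    intro a b ha hb he
    by_contra hne
    rcases lt_trichotomy a b with h | h | h
    · have := grow a b ha h
      have := hpos a
      rw [he] at this
      nlinarith
    · exact hne h
    · have := grow b a hb h
      have := hpos b
      rw [← he] at this
      nlinarith
  refine ⟨2 * ((d * d * (K + 1) * (K + 1) : ℕ) : ℝ), ?_⟩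
  intro N c hc m hm
  -- inhomogeneous sum bound
  have hc1 : ((Finset.Icc 1 N ×ˢ Finset.Icc 1 N ×ˢ Finset.Icc 1 d ×ˢ Finset.Icc 1 d).filter
      (fun p : ℕ × ℕ × ℕ × ℕ =>
        (p.2.2.1 : ℤ) * n p.1 - (p.2.2.2 : ℤ) * n p.2.1 = (m : ℤ))).card
      ≤ d * d * (K + 1) * (K + 1) := by
    apply card_bound
    · intro p hp
      simp only [Finset.mem_filter, Finset.mem_product, Finset.mem_Icc] at hp
      exact ⟨hp.1.2.2.1.1, hp.1.2.2.1.2, hp.1.2.2.2.1, hp.1.2.2.2.2⟩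
    · intro p hp q hq hj hj' hmk hml
      obtain ⟨k, l, j, j'⟩ := p
      obtain ⟨k2, l2, j2, j2'⟩ := q
      simp only [Finset.mem_filter, Finset.mem_product, Finset.mem_Icc] at hp hq
      dsimp only at hj hj' hmk hml ⊢
      subst hj; subst hj'
      obtain ⟨⟨-, -, hjr, hj'r⟩, he1⟩ := hp
      obtain ⟨-, he2⟩ := hq
      have e1 : j * n k = j' * n l + m := by zify; linarith [he1]
      have e2 : j * n k2 = j' * n l2 + m := by zify; linarith [he2]
      have huq := uniq_inhom n hpos d K m hm grow ninj k l j j' k2 l2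
        hjr.1 hjr.2 hj'r.1 hj'r.2 e1 e2 hmk hml
      obtain ⟨rfl, rfl⟩ := huq
      rfl
  -- homogeneous sum bound
  have hc2 : ((Finset.Icc 1 N ×ˢ Finset.Icc 1 N ×ˢ Finset.Icc 1 d ×ˢ Finset.Icc 1 d).filter
      (fun p : ℕ × ℕ × ℕ × ℕ =>
        p.1 ≠ p.2.1 ∧ (p.2.2.1 : ℤ) * n p.1 - (p.2.2.2 : ℤ) * n p.2.1 = 0)).card
      ≤ d * d * (K + 1) * (K + 1) := by
    apply card_bound
    · intro p hp
      simp only [Finset.mem_filter, Finset.mem_product, Finset.mem_Icc] at hp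
      exact ⟨hp.1.2.2.1.1, hp.1.2.2.1.2, hp.1.2.2.2.1, hp.1.2.2.2.2⟩
    · intro p hp q hq hj hj' hmk hml
      obtain ⟨k, l, j, j'⟩ := p
      obtain ⟨k2, l2, j2, j2'⟩ := q
      simp only [Finset.mem_filter, Finset.mem_product, Finset.mem_Icc] at hp hq
      dsimp only at hj hj' hmk hml ⊢
      subst hj; subst hj'
      obtain ⟨⟨-, -, hjr, hj'r⟩, hne1, he1⟩ := hp
      obtain ⟨-, hne2, he2⟩ := hq
      have e1 : j * n k = j' * n l := by zify; linarith [he1]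
      have e2 : j * n k2 = j' * n l2 := by zify; linarith [he2]
      have huq := uniq_hom n hpos d K grow ninj k l j j' k2 l2
        hjr.1 hjr.2 hj'r.1 hj'r.2 hne1 e1 e2 hmk hml
      obtain ⟨rfl, rfl⟩ := huq
      rfl
  have hs1 := (sum_weight_le_card N d c hc
      (fun p : ℕ × ℕ × ℕ × ℕ =>
        (p.2.2.1 : ℤ) * n p.1 - (p.2.2.2 : ℤ) * n p.2.1 = (m : ℤ))).trans
    (show _ ≤ ((d * d * (K + 1) * (K + 1) : ℕ) : ℝ) from Nat.cast_le.mpr hc1)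
  have hs2 := (sum_weight_le_card N d c hc
      (fun p : ℕ × ℕ × ℕ × ℕ =>
        p.1 ≠ p.2.1 ∧ (p.2.2.1 : ℤ) * n p.1 - (p.2.2.2 : ℤ) * n p.2.1 = 0)).trans
    (show _ ≤ ((d * d * (K + 1) * (K + 1) : ℕ) : ℝ) from Nat.cast_le.mpr hc2)
  calc _ ≤ ((d * d * (K + 1) * (K + 1) : ℕ) : ℝ) + ((d * d * (K + 1) * (K + 1) : ℕ) : ℝ) :=
        add_le_add hs1 hs2
    _ = 2 * ((d * d * (K + 1) * (K + 1) : ℕ) : ℝ) := by ring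
end

section
/- Let q > 1 and let (n_k)_{k≥1} be a sequence of positive integers with n_{k+1}/n_k ≥ q for all k. Let p(x) = Σ_{j=1}^d a_j cos(2πjx) be an even trigonometric polynomial of degree d. Then there is a constant C = C(p, q, d) such that for every finite set Δ of positive integers and all weights (c_k)_{k∈Δ} with 0 ≤ c_k ≤ 1, ∫₀¹ (Σ_{k∈Δ} c_k p(n_k x))⁴ dx ≤ C·(Σ_{k∈Δ} c_k²)². -/
open MeasureTheory Finset Real Set

/-- The even trigonometric polynomial p(x) = Σ_{j=1}^d a_j cos(2πjx). -/
noncomputable def trigPoly (d : ℕ) (a : ℕ → ℝ) (x : ℝ) : ℝ :=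
  ∑ j ∈ Finset.Icc 1 d, a j * Real.cos (2 * Real.pi * j * x)

lemma four_cos_identity (A B C D : ℝ) : cos A * cos B * cos C * cos D =
    (cos (A+B+C+D) + cos (A+B+C-D) + cos (A+B-C+D) + cos (A+B-C-D)
    + cos (A-B+C+D) + cos (A-B+C-D) + cos (A-B-C+D) + cos (A-B-C-D)) / 8 := by
  simp only [cos_add, cos_sub, sin_add, sin_sub]
  ring

lemma integral_cos_int (N : ℤ) (h : N ≠ 0) : ∫ x in (0:ℝ)..1, Real.cos (2*Real.pi*N*x) = 0 := by
  have h2 : (2*Real.pi*(N:ℝ)) ≠ 0 := by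
    have := Real.pi_ne_zero
    intro hc
    rcases mul_eq_zero.1 hc with h'|h'
    · rcases mul_eq_zero.1 h' with h''|h'' <;> simp_all
    · exact h (by exact_mod_cast h')
  have h3 := intervalIntegral.integral_comp_mul_left (fun y => Real.cos y) h2 (a := 0) (b := 1)
  simp only [mul_zero, mul_one] at h3
  rw [h3, integral_cos]
  have hs : Real.sin (2*Real.pi*N) = 0 := by
    have := Real.sin_int_mul_pi (2*N)
    push_cast at this ⊢
    rw [show 2*Real.pi*(N:ℝ) = 2*(N:ℝ)*Real.pi by ring, this]
  simp [hs]

lemma integral_four_cos_eq_zero (m0 m1 m2 m3 : ℕ)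
    (h : ∀ e1 e2 e3 : ℤ, (e1 = 1 ∨ e1 = -1) → (e2 = 1 ∨ e2 = -1) → (e3 = 1 ∨ e3 = -1) →
      (m0:ℤ) + e1*m1 + e2*m2 + e3*m3 ≠ 0) :
    ∫ x in (0:ℝ)..1, cos (2*π*m0*x) * cos (2*π*m1*x) * cos (2*π*m2*x) * cos (2*π*m3*x) = 0 := by
  have I : ∀ N : ℤ, IntervalIntegrable (fun x => cos (2*π*(N:ℝ)*x)) volume 0 1 :=
    fun N => (Real.continuous_cos.comp (by continuity)).intervalIntegrable 0 1
  have key : ∀ e1 e2 e3 : ℤ, (e1 = 1 ∨ e1 = -1) → (e2 = 1 ∨ e2 = -1) → (e3 = 1 ∨ e3 = -1) →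
      ∫ x in (0:ℝ)..1, cos (2*π*(((m0:ℤ) + e1*m1 + e2*m2 + e3*m3 : ℤ):ℝ)*x) = 0 :=
    fun e1 e2 e3 h1 h2 h3 => integral_cos_int _ (h e1 e2 e3 h1 h2 h3)
  have heq : (fun x : ℝ => cos (2*π*m0*x) * cos (2*π*m1*x) * cos (2*π*m2*x) * cos (2*π*m3*x))
      = fun x => (cos (2*π*(((m0:ℤ) + 1*m1 + 1*m2 + 1*m3 : ℤ):ℝ)*x)
        + cos (2*π*(((m0:ℤ) + 1*m1 + 1*m2 + (-1)*m3 : ℤ):ℝ)*x)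
        + cos (2*π*(((m0:ℤ) + 1*m1 + (-1)*m2 + 1*m3 : ℤ):ℝ)*x)
        + cos (2*π*(((m0:ℤ) + 1*m1 + (-1)*m2 + (-1)*m3 : ℤ):ℝ)*x)
        + cos (2*π*(((m0:ℤ) + (-1)*m1 + 1*m2 + 1*m3 : ℤ):ℝ)*x)
        + cos (2*π*(((m0:ℤ) + (-1)*m1 + 1*m2 + (-1)*m3 : ℤ):ℝ)*x)
        + cos (2*π*(((m0:ℤ) + (-1)*m1 + (-1)*m2 + 1*m3 : ℤ):ℝ)*x)
        + cos (2*π*(((m0:ℤ) + (-1)*m1 + (-1)*m2 + (-1)*m3 : ℤ):ℝ)*x)) / 8 := by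
    funext x
    rw [four_cos_identity]
    push_cast
    ring_nf
  rw [heq]
  rw [intervalIntegral.integral_div]
  rw [intervalIntegral.integral_add (((((((I _).add (I _)).add (I _)).add (I _)).add (I _)).add (I _)).add (I _)) (I _),
      intervalIntegral.integral_add ((((((I _).add (I _)).add (I _)).add (I _)).add (I _)).add (I _)) (I _),
      intervalIntegral.integral_add (((((I _).add (I _)).add (I _)).add (I _)).add (I _)) (I _),
      intervalIntegral.integral_add ((((I _).add (I _)).add (I _)).add (I _)) (I _),
      intervalIntegral.integral_add (((I _).add (I _)).add (I _)) (I _),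
      intervalIntegral.integral_add ((I _).add (I _)) (I _),
      intervalIntegral.integral_add (I _) (I _)]
  rw [key 1 1 1 (by norm_num) (by norm_num) (by norm_num),
      key 1 1 (-1) (by norm_num) (by norm_num) (by norm_num),
      key 1 (-1) 1 (by norm_num) (by norm_num) (by norm_num),
      key 1 (-1) (-1) (by norm_num) (by norm_num) (by norm_num),
      key (-1) 1 1 (by norm_num) (by norm_num) (by norm_num),
      key (-1) 1 (-1) (by norm_num) (by norm_num) (by norm_num),
      key (-1) (-1) 1 (by norm_num) (by norm_num) (by norm_num),
      key (-1) (-1) (-1) (by norm_num) (by norm_num) (by norm_num)]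
  norm_num

lemma ico_to_interval (f : ℝ → ℝ) : ∫ x in Set.Ico (0:ℝ) 1, f x = ∫ x in (0:ℝ)..1, f x := by
  rw [intervalIntegral.integral_of_le zero_le_one, integral_Ico_eq_integral_Ioo,
    integral_Ioc_eq_integral_Ioo]

lemma abs_int_le (f : ℝ → ℝ) (h : ∀ x, |f x| ≤ 1) : |∫ x in (0:ℝ)..1, f x| ≤ 1 := by
  have := intervalIntegral.norm_integral_le_of_norm_le_const (C := 1) (a := (0:ℝ)) (b := 1) (f := f)
    (fun x _ => by simpa using h x)
  simpa using this


def freqZ (n : ℕ → ℕ) (s : Fin 4 → ℤ) (p : Fin 4 → ℕ × ℕ) : ℤ :=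
  ∑ i : Fin 4, s i * ((p i).2 * n (p i).1 : ℕ)

def sorted4 (p : Fin 4 → ℕ × ℕ) : Prop :=
  (p 0).1 ≤ (p 1).1 ∧ (p 1).1 ≤ (p 2).1 ∧ (p 2).1 ≤ (p 3).1

instance (p : Fin 4 → ℕ × ℕ) : Decidable (sorted4 p) := by unfold sorted4; infer_instance

section gap
variable {q : ℝ} {n : ℕ → ℕ}

lemma n_sm (hq : 1 < q) (hpos : ∀ k, 0 < n k) (hgap : ∀ k, q * (n k : ℝ) ≤ (n (k + 1) : ℝ)) :
    StrictMono n := by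
  apply strictMono_nat_of_lt_succ
  intro k
  have h1 : (n k : ℝ) < q * n k := by
    have h0 : (0:ℝ) < n k := by exact_mod_cast hpos k
    nlinarith
  have := lt_of_lt_of_le h1 (hgap k)
  exact_mod_cast this

lemma n_growth (hq : 1 < q) (hpos : ∀ k, 0 < n k) (hgap : ∀ k, q * (n k : ℝ) ≤ (n (k + 1) : ℝ))
    {k l : ℕ} (hkl : k ≤ l) : q ^ (l - k) * (n k : ℝ) ≤ (n l : ℝ) := by
  induction l, hkl using Nat.le_induction with
  | base => simp
  | succ l hkl ih =>
    have h1 : l + 1 - k = (l - k) + 1 := by omega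
    rw [h1, pow_succ]
    have hq0 : (0:ℝ) < q := lt_trans zero_lt_one hq
    calc q ^ (l - k) * q * (n k : ℝ) = q * (q ^ (l-k) * (n k:ℝ)) := by ring
      _ ≤ q * (n l : ℝ) := by nlinarith
      _ ≤ (n (l+1) : ℝ) := hgap l

lemma gap_le (hq : 1 < q) (hpos : ∀ k, 0 < n k) (hgap : ∀ k, q * (n k : ℝ) ≤ (n (k + 1) : ℝ))
    {d L k2 k3 : ℕ} (hL : (3*d : ℝ) ≤ q ^ L) (hk : k2 ≤ k3)
    (hb : (n k3 : ℝ) ≤ 3 * d * n k2) : k3 ≤ k2 + L := by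
  have h1 := n_growth hq hpos hgap hk
  have h2 : (0:ℝ) < n k2 := by exact_mod_cast hpos k2
  have h3 : q ^ (k3 - k2) ≤ q ^ L := by
    have : q ^ (k3 - k2) * (n k2 : ℝ) ≤ q ^ L * n k2 := by nlinarith
    exact le_of_mul_le_mul_right this h2
  have := (pow_le_pow_iff_right₀ hq).1 h3
  omega

end gap

-- Lemma D : in a sorted vanishing tuple, n(k3) ≤ 3 d n(k2)
lemma freq_bound {n : ℕ → ℕ} (hmono : Monotone n) {d : ℕ} {s : Fin 4 → ℤ}
    (hs : ∀ i, s i = 1 ∨ s i = -1) {p : Fin 4 → ℕ × ℕ}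
    (hj : ∀ i, 1 ≤ (p i).2 ∧ (p i).2 ≤ d)
    (hfreq : freqZ n s p = 0) (hsort : sorted4 p) :
    (n (p 3).1 : ℝ) ≤ 3 * d * n (p 2).1 := by
  obtain ⟨h01, h12, h23⟩ := hsort
  have key : (n (p 3).1 : ℤ) ≤ 3 * d * n (p 2).1 := by
    have hfr : s 0 * (((p 0).2 : ℤ) * n (p 0).1) + s 1 * (((p 1).2 : ℤ) * n (p 1).1)
        + s 2 * (((p 2).2 : ℤ) * n (p 2).1) + s 3 * (((p 3).2 : ℤ) * n (p 3).1) = 0 := by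
      have h := hfreq
      unfold freqZ at h
      rw [Fin.sum_univ_four] at h
      push_cast at h
      linarith
    have htn : ∀ i : Fin 4, (0:ℤ) ≤ ((p i).2 : ℤ) * n (p i).1 := fun i => by positivity
    have hb : ∀ i : Fin 4, i ≠ (3:Fin 4) → ((p i).2 : ℤ) * n (p i).1 ≤ (d : ℤ) * n (p 2).1 := by
      intro i hi
      have h1 : (p i).1 ≤ (p 2).1 := by
        fin_cases i
        · exact le_trans h01 h12
        · exact h12
        · exact le_refl _
        · exact absurd rfl hi
      have h2 : n (p i).1 ≤ n (p 2).1 := hmono h1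
      have h3 : (p i).2 ≤ d := (hj i).2
      have h4 : (p i).2 * n (p i).1 ≤ d * n (p 2).1 := Nat.mul_le_mul h3 h2
      exact_mod_cast h4
    have hb0 := hb 0 (by decide)
    have hb1 := hb 1 (by decide)
    have hb2 := hb 2 (by decide)
    have h3 : (n (p 3).1 : ℤ) ≤ ((p 3).2 : ℤ) * n (p 3).1 := by
      have h5 : 1 * n (p 3).1 ≤ (p 3).2 * n (p 3).1 := Nat.mul_le_mul_right _ (hj 3).1
      simp only [one_mul] at h5
      exact_mod_cast h5
    have ht0 := htn 0; have ht1 := htn 1; have ht2 := htn 2; have ht3 := htn 3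
    rcases hs 0 with e0 | e0 <;> rcases hs 1 with e1 | e1 <;>
      rcases hs 2 with e2 | e2 <;> rcases hs 3 with e3 | e3 <;>
      rw [e0, e1, e2, e3] at hfr <;> linarith
  have key2 : ((n (p 3).1 : ℝ)) ≤ 3 * (d:ℝ) * (n (p 2).1 : ℝ) := by exact_mod_cast key
  linarith

-- Lemma E : determinacy of one coordinate
lemma determinacy {n : ℕ → ℕ} (hinj : Function.Injective n) {s : Fin 4 → ℤ}
    (hs : ∀ i, s i = 1 ∨ s i = -1) {p p' : Fin 4 → ℕ × ℕ} (i0 : Fin 4)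
    (hfreq : freqZ n s p = 0) (hfreq' : freqZ n s p' = 0)
    (heq : ∀ i, i ≠ i0 → p i = p' i) (hj : (p i0).2 = (p' i0).2)
    (hj1 : 1 ≤ (p i0).2) : p = p' := by
  have hsum : s i0 * ((p i0).2 * n (p i0).1 : ℕ) = s i0 * ((p' i0).2 * n (p' i0).1 : ℕ) := by
    have h1 : ∀ (r : Fin 4 → ℕ × ℕ), freqZ n s r =
        s i0 * ((r i0).2 * n (r i0).1 : ℕ) + ∑ i ∈ Finset.univ.erase i0, s i * ((r i).2 * n (r i).1 : ℕ) := by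
      intro r
      unfold freqZ
      rw [← Finset.add_sum_erase _ _ (Finset.mem_univ i0)]
    have h2 : ∑ i ∈ Finset.univ.erase i0, s i * ((p i).2 * n (p i).1 : ℕ)
        = ∑ i ∈ Finset.univ.erase i0, s i * ((p' i).2 * n (p' i).1 : ℕ) := by
      apply Finset.sum_congr rfl
      intro i hi
      rw [heq i (Finset.ne_of_mem_erase hi)]
    rw [h1 p, h2] at hfreq
    rw [h1 p'] at hfreq'
    linarith
  have hmm : ((p i0).2 * n (p i0).1 : ℤ) = ((p' i0).2 * n (p' i0).1 : ℤ) := by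
    rcases hs i0 with e | e <;> rw [e] at hsum <;> push_cast at hsum ⊢ <;> linarith
  have hnat : (p i0).2 * n (p i0).1 = (p' i0).2 * n (p' i0).1 := by exact_mod_cast hmm
  rw [← hj] at hnat
  have hn : n (p i0).1 = n (p' i0).1 := by
    have h2 : 0 < (p i0).2 := hj1
    exact Nat.eq_of_mul_eq_mul_left h2 hnat
  have hk : (p i0).1 = (p' i0).1 := hinj hn
  funext i
  by_cases hi : i = i0
  · subst hi; exact Prod.ext hk hj
  · exact heq i hi

-- Lemma F : every tuple can be sorted by some permutation
lemma exists_sort (p : Fin 4 → ℕ × ℕ) : ∃ σ : Equiv.Perm (Fin 4), sorted4 (p ∘ σ) := by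
  refine ⟨Tuple.sort (fun i => (p i).1), ?_⟩
  have h := Tuple.monotone_sort (fun i => (p i).1)
  refine ⟨h ?_, h ?_, h ?_⟩ <;> decide

-- Lemma G : covering sum bound
lemma sum_le_sum_cover {α β : Type*} [Fintype β] [DecidableEq α]
    (F : Finset α) (w : α → ℝ) (hw : ∀ p ∈ F, 0 ≤ w p)
    (P : β → α → Prop) [∀ σ, DecidablePred (P σ)]
    (hc : ∀ p ∈ F, ∃ σ : β, P σ p) :
    ∑ p ∈ F, w p ≤ ∑ σ : β, ∑ p ∈ F.filter (P σ), w p := by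
  have h1 : ∀ p ∈ F, w p ≤ ∑ σ : β, if P σ p then w p else 0 := by
    intro p hp
    obtain ⟨σ0, hσ0⟩ := hc p hp
    have : (if P σ0 p then w p else 0) ≤ ∑ σ : β, if P σ p then w p else 0 := by
      apply Finset.single_le_sum (f := fun σ => if P σ p then w p else 0)
      · intro σ _
        split
        · exact hw p hp
        · exact le_refl 0
      · exact Finset.mem_univ σ0
    rwa [if_pos hσ0] at this
  calc ∑ p ∈ F, w p ≤ ∑ p ∈ F, ∑ σ : β, if P σ p then w p else 0 :=
        Finset.sum_le_sum h1
    _ = ∑ σ : β, ∑ p ∈ F, if P σ p then w p else 0 := Finset.sum_comm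
    _ = ∑ σ : β, ∑ p ∈ F.filter (P σ), w p := by
        apply Finset.sum_congr rfl
        intro σ _
        rw [Finset.sum_filter]

-- Lemma H : fiberwise counting bound
lemma sum_le_card_mul {α β : Type*} [DecidableEq β]
    (Z : Finset α) (Φ : α → β) (Y : Finset β) (F : β → ℝ) (M : ℕ)
    (hmaps : ∀ p ∈ Z, Φ p ∈ Y) (hF : ∀ y ∈ Y, 0 ≤ F y)
    (hcard : ∀ y ∈ Y, (Z.filter fun p => Φ p = y).card ≤ M) :
    ∑ p ∈ Z, F (Φ p) ≤ (M : ℝ) * ∑ y ∈ Y, F y := by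
  rw [← Finset.sum_fiberwise_of_maps_to hmaps (fun p => F (Φ p))]
  rw [Finset.mul_sum]
  apply Finset.sum_le_sum
  intro y hy
  calc ∑ p ∈ Z.filter (fun p => Φ p = y), F (Φ p)
      = ∑ p ∈ Z.filter (fun p => Φ p = y), F y := by
        apply Finset.sum_congr rfl
        intro p hp
        rw [(Finset.mem_filter.1 hp).2]
    _ = ((Z.filter fun p => Φ p = y).card : ℝ) * F y := by
        rw [Finset.sum_const, nsmul_eq_mul]
    _ ≤ (M : ℝ) * F y := by
        apply mul_le_mul_of_nonneg_right _ (hF y hy)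
        exact_mod_cast hcard y hy

-- The sorted counting bound
lemma sorted_sum_bound (q : ℝ) (hq : 1 < q) (n : ℕ → ℕ) (hpos : ∀ k, 0 < n k)
    (hgap : ∀ k, q * (n k : ℝ) ≤ (n (k + 1) : ℝ)) (d L : ℕ) (hL : (3*d : ℝ) ≤ q ^ L)
    (Δ : Finset ℕ) (c : ℕ → ℝ) (hc : ∀ k ∈ Δ, 0 ≤ c k ∧ c k ≤ 1)
    (s : Fin 4 → ℤ) (hs : ∀ i, s i = 1 ∨ s i = -1) :
    ∑ p ∈ (Fintype.piFinset fun _ : Fin 4 => Δ ×ˢ Finset.Icc 1 d).filter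
        (fun p => freqZ n s p = 0 ∧ sorted4 p), ∏ i : Fin 4, c (p i).1
      ≤ ((2*L+1) * d^4 : ℝ) * (∑ k ∈ Δ, c k^2)^2 := by
  have hsm := n_sm hq hpos hgap
  have hmono := hsm.monotone
  have hinj := hsm.injective
  set Z := (Fintype.piFinset fun _ : Fin 4 => Δ ×ˢ Finset.Icc 1 d).filter
      (fun p => freqZ n s p = 0 ∧ sorted4 p) with hZ
  have hmem : ∀ p ∈ Z, (∀ i, (p i).1 ∈ Δ ∧ 1 ≤ (p i).2 ∧ (p i).2 ≤ d)
      ∧ freqZ n s p = 0 ∧ sorted4 p := by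
    intro p hp
    rw [hZ, Finset.mem_filter, Fintype.mem_piFinset] at hp
    refine ⟨fun i => ?_, hp.2⟩
    have := hp.1 i
    rw [Finset.mem_product, Finset.mem_Icc] at this
    exact ⟨this.1, this.2.1, this.2.2⟩
  have hgap3 : ∀ p ∈ Z, (p 2).1 ≤ (p 3).1 ∧ (p 3).1 ≤ (p 2).1 + L := by
    intro p hp
    obtain ⟨hall, hfreq, hsort⟩ := hmem p hp
    have h23 : (p 2).1 ≤ (p 3).1 := hsort.2.2
    have hb := freq_bound hmono hs (fun i => (hall i).2) hfreq hsort
    exact ⟨h23, gap_le hq hpos hgap hL h23 hb⟩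
  -- the fiber bound
  have Hfiber : ∀ a b a' b' : Fin 4, (a = 2 ∧ a' = 3 ∨ a = 3 ∧ a' = 2) →
      (b = 0 ∧ b' = 1 ∨ b = 1 ∧ b' = 0) →
      ∑ p ∈ Z, c (p a).1^2 * c (p b).1^2 ≤ ((2*L+1) * d^4 : ℝ) * (∑ k ∈ Δ, c k^2)^2 := by
    intro a b a' b' ha hb
    have hY : (∑ k ∈ Δ, c k^2)^2 = ∑ y ∈ Δ ×ˢ Δ, c y.1^2 * c y.2^2 := by
      rw [sq, Finset.sum_mul_sum, Finset.sum_product]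
    rw [hY]
    have := sum_le_card_mul Z (fun p => ((p a).1, (p b).1)) (Δ ×ˢ Δ)
      (fun y => c y.1^2 * c y.2^2) ((2*L+1) * d^4) ?_ ?_ ?_
    · exact_mod_cast this
    · intro p hp
      rw [Finset.mem_product]
      exact ⟨((hmem p hp).1 a).1, ((hmem p hp).1 b).1⟩
    · intro y _; positivity
    · intro y _
      refine le_trans (Finset.card_le_card_of_injOn
        (s := Z.filter fun p => ((p a).1, (p b).1) = y)
        (t := Finset.Icc (y.1 - L) (y.1 + L) ×ˢ Fintype.piFinset (fun _ : Fin 4 => Finset.Icc 1 d))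
        (fun p : Fin 4 → ℕ × ℕ => ((p a').1, fun i => (p i).2)) ?_ ?_) ?_
      rotate_left 2
      · rw [Finset.card_product, Nat.card_Icc, Fintype.card_piFinset]
        simp only [Nat.card_Icc, Finset.prod_const, Finset.card_univ, Fintype.card_fin]
        have h1 : y.1 + L + 1 - (y.1 - L) ≤ 2*L+1 := by omega
        have h2 : d + 1 - 1 = d := by omega
        rw [h2]
        exact Nat.mul_le_mul_right _ h1
      · -- maps to
        intro p hp
        rw [Finset.mem_coe, Finset.mem_filter] at hp
        rw [Finset.mem_coe]
        obtain ⟨hpZ, hΦ⟩ := hp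
        obtain ⟨h23, h3L⟩ := hgap3 p hpZ
        have hau : (p a).1 = y.1 := by rw [← hΦ]
        rw [Finset.mem_product, Finset.mem_Icc]
        constructor
        · rcases ha with ⟨ha1, ha2⟩ | ⟨ha1, ha2⟩ <;> subst ha1 <;> subst ha2 <;>
            constructor
          · calc y.1 - L ≤ y.1 := Nat.sub_le _ _
              _ = (p 2).1 := hau.symm
              _ ≤ (p 3).1 := h23
          · calc (p 3).1 ≤ (p 2).1 + L := h3L
              _ = y.1 + L := by rw [hau]
          · have h5 : y.1 ≤ (p 2).1 + L := by rw [← hau]; exact h3L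
            exact Nat.sub_le_of_le_add h5
          · calc (p 2).1 ≤ (p 3).1 := h23
              _ = y.1 := hau
              _ ≤ y.1 + L := Nat.le_add_right _ _
        · rw [Fintype.mem_piFinset]
          intro i
          rw [Finset.mem_Icc]
          exact ⟨((hmem p hpZ).1 i).2.1, ((hmem p hpZ).1 i).2.2⟩
      · -- inj on
        intro p hp p' hp' hf
        rw [Finset.mem_coe, Finset.mem_filter] at hp hp'
        obtain ⟨hpZ, hΦ⟩ := hp
        obtain ⟨hpZ', hΦ'⟩ := hp'
        have hka' : (p a').1 = (p' a').1 := by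
          have := congrArg Prod.fst hf; simpa using this
        have hj : ∀ i, (p i).2 = (p' i).2 := by
          have := congrArg Prod.snd hf
          intro i; exact congrFun (by simpa using this) i
        have hka : (p a).1 = (p' a).1 := by
          have h1 : (p a).1 = y.1 := by rw [← hΦ]
          have h2 : (p' a).1 = y.1 := by rw [← hΦ']
          rw [h1, h2]
        have hkb : (p b).1 = (p' b).1 := by
          have h1 : (p b).1 = y.2 := by rw [← hΦ]
          have h2 : (p' b).1 = y.2 := by rw [← hΦ']
          rw [h1, h2]
        have hfreq := (hmem p hpZ).2.1
        have hfreq' := (hmem p' hpZ').2.1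
        apply determinacy hinj hs b' hfreq hfreq' ?_ (hj b') ((hmem p hpZ).1 b').2.1
        intro i hi
        rcases ha with ⟨ha1, ha2⟩ | ⟨ha1, ha2⟩ <;> rcases hb with ⟨hb1, hb2⟩ | ⟨hb1, hb2⟩ <;>
          subst ha1 <;> subst ha2 <;> subst hb1 <;> subst hb2 <;> fin_cases i <;>
          first
            | (exact absurd rfl hi)
            | (exact Prod.ext hka (hj _))
            | (exact Prod.ext hkb (hj _))
            | (exact Prod.ext hka' (hj _))
  -- AM-GM per tuple then combine
  have hAM : ∀ p ∈ Z, ∏ i : Fin 4, c (p i).1 ≤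
      (1/4) * (c (p 2).1^2 * c (p 0).1^2 + c (p 2).1^2 * c (p 1).1^2
        + c (p 3).1^2 * c (p 0).1^2 + c (p 3).1^2 * c (p 1).1^2) := by
    intro p hp
    have h0 := (hc _ ((hmem p hp).1 0).1).1
    have h1 := (hc _ ((hmem p hp).1 1).1).1
    have h2 := (hc _ ((hmem p hp).1 2).1).1
    have h3 := (hc _ ((hmem p hp).1 3).1).1
    rw [Fin.prod_univ_four]
    have A := two_mul_le_add_sq (c (p 0).1) (c (p 1).1)
    have B := two_mul_le_add_sq (c (p 2).1) (c (p 3).1)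
    nlinarith [mul_nonneg h0 h1, mul_nonneg h2 h3, mul_nonneg (mul_nonneg h0 h1) (mul_nonneg h2 h3),
      mul_le_mul A B (by nlinarith [mul_nonneg h2 h3]) (by nlinarith [mul_nonneg h0 h1])]
  calc ∑ p ∈ Z, ∏ i : Fin 4, c (p i).1
      ≤ ∑ p ∈ Z, (1/4) * (c (p 2).1^2 * c (p 0).1^2 + c (p 2).1^2 * c (p 1).1^2
        + c (p 3).1^2 * c (p 0).1^2 + c (p 3).1^2 * c (p 1).1^2) := Finset.sum_le_sum hAM
    _ = (1/4) * ((∑ p ∈ Z, c (p 2).1^2 * c (p 0).1^2) + (∑ p ∈ Z, c (p 2).1^2 * c (p 1).1^2)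
        + (∑ p ∈ Z, c (p 3).1^2 * c (p 0).1^2) + (∑ p ∈ Z, c (p 3).1^2 * c (p 1).1^2)) := by
      rw [← Finset.mul_sum]
      congr 1
      rw [← Finset.sum_add_distrib, ← Finset.sum_add_distrib, ← Finset.sum_add_distrib]
    _ ≤ (1/4) * (((2*L+1) * d^4 : ℝ) * (∑ k ∈ Δ, c k^2)^2 + ((2*L+1) * d^4 : ℝ) * (∑ k ∈ Δ, c k^2)^2
        + ((2*L+1) * d^4 : ℝ) * (∑ k ∈ Δ, c k^2)^2 + ((2*L+1) * d^4 : ℝ) * (∑ k ∈ Δ, c k^2)^2) := by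
      have H1 := Hfiber 2 0 3 1 (Or.inl ⟨rfl, rfl⟩) (Or.inl ⟨rfl, rfl⟩)
      have H2 := Hfiber 2 1 3 0 (Or.inl ⟨rfl, rfl⟩) (Or.inr ⟨rfl, rfl⟩)
      have H3 := Hfiber 3 0 2 1 (Or.inr ⟨rfl, rfl⟩) (Or.inl ⟨rfl, rfl⟩)
      have H4 := Hfiber 3 1 2 0 (Or.inr ⟨rfl, rfl⟩) (Or.inr ⟨rfl, rfl⟩)
      have : (0:ℝ) ≤ 1/4 := by norm_num
      linarith
    _ = ((2*L+1) * d^4 : ℝ) * (∑ k ∈ Δ, c k^2)^2 := by ring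

-- permutation reindexing
lemma perm_reindex (n : ℕ → ℕ) (d : ℕ) (Δ : Finset ℕ) (c : ℕ → ℝ)
    (s : Fin 4 → ℤ) (σ : Equiv.Perm (Fin 4)) :
    ∑ p ∈ (Fintype.piFinset fun _ : Fin 4 => Δ ×ˢ Finset.Icc 1 d).filter
        (fun p => freqZ n s p = 0 ∧ sorted4 (p ∘ σ)), ∏ i : Fin 4, c (p i).1
    = ∑ p ∈ (Fintype.piFinset fun _ : Fin 4 => Δ ×ˢ Finset.Icc 1 d).filter
        (fun p => freqZ n (s ∘ σ) p = 0 ∧ sorted4 p), ∏ i : Fin 4, c (p i).1 := by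
  have hfr : ∀ p : Fin 4 → ℕ × ℕ, freqZ n (s ∘ σ) (p ∘ σ) = freqZ n s p := by
    intro p
    unfold freqZ
    exact Equiv.Perm.sum_comp σ Finset.univ (fun i => s i * ((p i).2 * n (p i).1 : ℕ))
      (by simp)
  have hpr : ∀ p : Fin 4 → ℕ × ℕ, ∏ i : Fin 4, c ((p ∘ σ) i).1 = ∏ i : Fin 4, c (p i).1 := by
    intro p
    exact Equiv.Perm.prod_comp σ Finset.univ (fun i => c (p i).1) (by simp)
  apply Finset.sum_nbij' (i := fun p => p ∘ σ) (j := fun p => p ∘ σ.symm)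
  · intro p hp
    rw [Finset.mem_filter, Fintype.mem_piFinset] at hp ⊢
    refine ⟨fun i => hp.1 (σ i), ?_, ?_⟩
    · rw [hfr]; exact hp.2.1
    · have : (p ∘ σ) ∘ σ = p ∘ σ ∘ σ := rfl
      exact hp.2.2
  · intro p hp
    rw [Finset.mem_filter, Fintype.mem_piFinset] at hp ⊢
    refine ⟨fun i => hp.1 (σ.symm i), ?_, ?_⟩
    · rw [← hp.2.1, ← hfr (p ∘ σ.symm)]
      congr 1
      funext i
      simp
    · have h : (p ∘ σ.symm) ∘ σ = p := by funext i; simp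
      rw [h]
      exact hp.2.2
  · intro p _
    funext i; simp
  · intro p _
    funext i; simp
  · intro p _
    rw [← hpr p]

-- per sign pattern bound
lemma sign_sum_bound (q : ℝ) (hq : 1 < q) (n : ℕ → ℕ) (hpos : ∀ k, 0 < n k)
    (hgap : ∀ k, q * (n k : ℝ) ≤ (n (k + 1) : ℝ)) (d L : ℕ) (hL : (3*d : ℝ) ≤ q ^ L)
    (Δ : Finset ℕ) (c : ℕ → ℝ) (hc : ∀ k ∈ Δ, 0 ≤ c k ∧ c k ≤ 1)
    (s : Fin 4 → ℤ) (hs : ∀ i, s i = 1 ∨ s i = -1) :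
    ∑ p ∈ (Fintype.piFinset fun _ : Fin 4 => Δ ×ˢ Finset.Icc 1 d).filter
        (fun p => freqZ n s p = 0), ∏ i : Fin 4, c (p i).1
      ≤ 24 * (((2*L+1) * d^4 : ℝ) * (∑ k ∈ Δ, c k^2)^2) := by
  have hw : ∀ p ∈ (Fintype.piFinset fun _ : Fin 4 => Δ ×ˢ Finset.Icc 1 d).filter
      (fun p => freqZ n s p = 0), 0 ≤ ∏ i : Fin 4, c (p i).1 := by
    intro p hp
    rw [Finset.mem_filter, Fintype.mem_piFinset] at hp
    apply Finset.prod_nonneg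
    intro i _
    have := hp.1 i
    rw [Finset.mem_product] at this
    exact (hc _ this.1).1
  have cover := sum_le_sum_cover _ _ hw (fun (σ : Equiv.Perm (Fin 4)) p => sorted4 (p ∘ σ))
    (fun p _ => exists_sort p)
  refine le_trans cover ?_
  have hstep : ∀ σ : Equiv.Perm (Fin 4),
      ∑ p ∈ ((Fintype.piFinset fun _ : Fin 4 => Δ ×ˢ Finset.Icc 1 d).filter
        (fun p => freqZ n s p = 0)).filter (fun p => sorted4 (p ∘ σ)), ∏ i : Fin 4, c (p i).1
      ≤ ((2*L+1) * d^4 : ℝ) * (∑ k ∈ Δ, c k^2)^2 := by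
    intro σ
    rw [Finset.filter_filter]
    rw [perm_reindex n d Δ c s σ]
    exact sorted_sum_bound q hq n hpos hgap d L hL Δ c hc (s ∘ σ) (fun i => hs (σ i))
  calc ∑ σ : Equiv.Perm (Fin 4), ∑ p ∈ ((Fintype.piFinset fun _ : Fin 4 => Δ ×ˢ Finset.Icc 1 d).filter
        (fun p => freqZ n s p = 0)).filter (fun p => sorted4 (p ∘ σ)), ∏ i : Fin 4, c (p i).1
      ≤ ∑ _σ : Equiv.Perm (Fin 4), ((2*L+1) * d^4 : ℝ) * (∑ k ∈ Δ, c k^2)^2 :=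
        Finset.sum_le_sum (fun σ _ => hstep σ)
    _ = 24 * (((2*L+1) * d^4 : ℝ) * (∑ k ∈ Δ, c k^2)^2) := by
        rw [Finset.sum_const, Finset.card_univ, nsmul_eq_mul]
        have h24 : Fintype.card (Equiv.Perm (Fin 4)) = 24 := by
          rw [Fintype.card_perm]; rfl
        rw [h24]
        norm_num

lemma abs_integral_cos_prod_le (n : ℕ → ℕ) (p : Fin 4 → ℕ × ℕ) :
    |∫ x in (0:ℝ)..1, ∏ i : Fin 4, Real.cos (2*π*(((p i).2 * n (p i).1 : ℕ))*x)|
      ≤ ∑ s ∈ Fintype.piFinset (fun _ : Fin 4 => ({1, -1} : Finset ℤ)),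
          (if freqZ n s p = 0 then (1:ℝ) else 0) := by
  have hnonneg : (0:ℝ) ≤ ∑ s ∈ Fintype.piFinset (fun _ : Fin 4 => ({1, -1} : Finset ℤ)),
      (if freqZ n s p = 0 then (1:ℝ) else 0) :=
    Finset.sum_nonneg fun s _ => by split <;> norm_num
  have hprod : (fun x : ℝ => ∏ i : Fin 4, Real.cos (2*π*(((p i).2 * n (p i).1 : ℕ))*x))
      = fun x => Real.cos (2*π*(((p 0).2 * n (p 0).1 : ℕ))*x)
          * Real.cos (2*π*(((p 1).2 * n (p 1).1 : ℕ))*x)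
          * Real.cos (2*π*(((p 2).2 * n (p 2).1 : ℕ))*x)
          * Real.cos (2*π*(((p 3).2 * n (p 3).1 : ℕ))*x) :=
    funext fun x => Fin.prod_univ_four _
  by_cases h0 : (∀ e1 e2 e3 : ℤ, (e1 = 1 ∨ e1 = -1) → (e2 = 1 ∨ e2 = -1) → (e3 = 1 ∨ e3 = -1) →
      (((p 0).2 * n (p 0).1 : ℕ):ℤ) + e1*((p 1).2 * n (p 1).1 : ℕ) + e2*((p 2).2 * n (p 2).1 : ℕ)
        + e3*((p 3).2 * n (p 3).1 : ℕ) ≠ 0)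
  · rw [hprod, integral_four_cos_eq_zero _ _ _ _ h0]
    simpa using hnonneg
  · push_neg at h0
    obtain ⟨e1, e2, e3, he1, he2, he3, heq⟩ := h0
    have h1 : |∫ x in (0:ℝ)..1, ∏ i : Fin 4, Real.cos (2*π*(((p i).2 * n (p i).1 : ℕ))*x)| ≤ 1 := by
      apply abs_int_le
      intro x
      rw [Finset.abs_prod]
      exact Finset.prod_le_one (fun i _ => abs_nonneg _) (fun i _ => Real.abs_cos_le_one _)
    refine le_trans h1 ?_
    have hs0 : (![1, e1, e2, e3] : Fin 4 → ℤ) ∈ Fintype.piFinset (fun _ : Fin 4 => ({1, -1} : Finset ℤ)) := by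
      rw [Fintype.mem_piFinset]
      intro i
      fin_cases i <;> simp only [Matrix.cons_val_zero, Matrix.cons_val_one, Matrix.head_cons,
        Matrix.cons_val_two, Matrix.cons_val_three, Matrix.tail_cons, Finset.mem_insert,
        Finset.mem_singleton] <;> tauto
    have hfr0 : freqZ n ![1, e1, e2, e3] p = 0 := by
      unfold freqZ
      rw [Fin.sum_univ_four]
      simp only [Matrix.cons_val_zero, Matrix.cons_val_one, Matrix.head_cons,
        Matrix.cons_val_two, Matrix.cons_val_three, Matrix.tail_cons]
      linarith [heq]
    calc (1:ℝ) = if freqZ n ![1, e1, e2, e3] p = 0 then (1:ℝ) else 0 := by rw [if_pos hfr0]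
      _ ≤ ∑ s ∈ Fintype.piFinset (fun _ : Fin 4 => ({1, -1} : Finset ℤ)),
          (if freqZ n s p = 0 then (1:ℝ) else 0) :=
          Finset.single_le_sum (f := fun s => if freqZ n s p = 0 then (1:ℝ) else 0)
            (fun s _ => by split <;> norm_num) hs0

theorem fourth_moment_bound
    (q : ℝ) (hq : 1 < q) (n : ℕ → ℕ) (hpos : ∀ k, 0 < n k)
    (hgap : ∀ k, q * (n k : ℝ) ≤ (n (k + 1) : ℝ))
    (d : ℕ) (a : ℕ → ℝ) :
    ∃ C : ℝ, ∀ (Δ : Finset ℕ) (c : ℕ → ℝ), (∀ k ∈ Δ, 0 ≤ c k ∧ c k ≤ 1) →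
      ∫ x in Set.Ico (0:ℝ) 1, (∑ k ∈ Δ, c k * trigPoly d a ((n k : ℝ) * x)) ^ 4
        ≤ C * (∑ k ∈ Δ, c k ^ 2) ^ 2 := by
  classical
  obtain ⟨L, hL'⟩ := pow_unbounded_of_one_lt (3*d : ℝ) hq
  have hL : (3*d:ℝ) ≤ q^L := le_of_lt hL'
  set A : ℝ := ∑ j ∈ Finset.Icc 1 d, |a j| with hA
  have hA0 : 0 ≤ A := Finset.sum_nonneg fun j _ => abs_nonneg _
  have hAj : ∀ j ∈ Finset.Icc 1 d, |a j| ≤ A :=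
    fun j hj => Finset.single_le_sum (fun i _ => abs_nonneg (a i)) hj
  refine ⟨16 * (A^4 * (24 * (((2*L+1) * d^4 : ℝ)))), ?_⟩
  intro Δ c hc
  -- pointwise expansion
  have hpt : ∀ x : ℝ, (∑ k ∈ Δ, c k * trigPoly d a ((n k : ℝ) * x)) ^ 4
      = ∑ p ∈ Fintype.piFinset (fun _ : Fin 4 => Δ ×ˢ Finset.Icc 1 d),
          ∏ i : Fin 4, ((c (p i).1 * a (p i).2) * Real.cos (2*π*(((p i).2 * n (p i).1 : ℕ))*x)) := by
    intro x
    have h1 : (∑ k ∈ Δ, c k * trigPoly d a ((n k : ℝ) * x))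
        = ∑ e ∈ Δ ×ˢ Finset.Icc 1 d, (c e.1 * a e.2) * Real.cos (2*π*((e.2 * n e.1 : ℕ))*x) := by
      rw [Finset.sum_product]
      apply Finset.sum_congr rfl
      intro k _
      unfold trigPoly
      rw [Finset.mul_sum]
      apply Finset.sum_congr rfl
      intro j _
      push_cast
      ring_nf
    rw [h1]
    have h2 : ∀ z : ℝ, z ^ 4 = ∏ _i : Fin 4, z := fun z => by
      rw [Finset.prod_const, Finset.card_univ, Fintype.card_fin]
    rw [h2, Finset.prod_univ_sum]
  have hcont : ∀ p : Fin 4 → ℕ × ℕ, Continuous (fun x : ℝ =>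
      ∏ i : Fin 4, ((c (p i).1 * a (p i).2) * Real.cos (2*π*(((p i).2 * n (p i).1 : ℕ))*x))) := by
    intro p
    apply continuous_finset_prod
    intro i _
    exact (continuous_const.mul (Real.continuous_cos.comp (by continuity)))
  -- reduce to sum of products of cosine integrals
  have hint : (∫ x in Set.Ico (0:ℝ) 1, (∑ k ∈ Δ, c k * trigPoly d a ((n k : ℝ) * x)) ^ 4)
      = ∑ p ∈ Fintype.piFinset (fun _ : Fin 4 => Δ ×ˢ Finset.Icc 1 d),
          (∏ i : Fin 4, (c (p i).1 * a (p i).2)) *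
            ∫ x in (0:ℝ)..1, ∏ i : Fin 4, Real.cos (2*π*(((p i).2 * n (p i).1 : ℕ))*x) := by
    rw [ico_to_interval]
    rw [intervalIntegral.integral_congr (g := fun x => ∑ p ∈ Fintype.piFinset (fun _ : Fin 4 => Δ ×ˢ Finset.Icc 1 d),
          ∏ i : Fin 4, ((c (p i).1 * a (p i).2) * Real.cos (2*π*(((p i).2 * n (p i).1 : ℕ))*x)))
        (fun x _ => hpt x)]
    rw [intervalIntegral.integral_finset_sum (fun p _ => (hcont p).intervalIntegrable 0 1)]
    apply Finset.sum_congr rfl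
    intro p _
    rw [show (fun x : ℝ => ∏ i : Fin 4, ((c (p i).1 * a (p i).2) * Real.cos (2*π*(((p i).2 * n (p i).1 : ℕ))*x)))
        = fun x => (∏ i : Fin 4, (c (p i).1 * a (p i).2)) *
            ∏ i : Fin 4, Real.cos (2*π*(((p i).2 * n (p i).1 : ℕ))*x) from
      funext fun x => Finset.prod_mul_distrib]
    exact intervalIntegral.integral_const_mul _ _
  rw [hint]
  -- per term bound
  have key : ∀ p ∈ Fintype.piFinset (fun _ : Fin 4 => Δ ×ˢ Finset.Icc 1 d),
      (∏ i : Fin 4, (c (p i).1 * a (p i).2)) *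
          (∫ x in (0:ℝ)..1, ∏ i : Fin 4, Real.cos (2*π*(((p i).2 * n (p i).1 : ℕ))*x))
        ≤ ∑ s ∈ Fintype.piFinset (fun _ : Fin 4 => ({1, -1} : Finset ℤ)),
            (if freqZ n s p = 0 then (∏ i : Fin 4, (c (p i).1 * |a (p i).2|)) else 0) := by
    intro p hp
    rw [Fintype.mem_piFinset] at hp
    have hmem : ∀ i, (p i).1 ∈ Δ ∧ (p i).2 ∈ Finset.Icc 1 d := by
      intro i
      have := hp i
      rw [Finset.mem_product] at this
      exact this
    have hprodnn : 0 ≤ ∏ i : Fin 4, (c (p i).1 * |a (p i).2|) :=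
      Finset.prod_nonneg fun i _ => mul_nonneg (hc _ (hmem i).1).1 (abs_nonneg _)
    have habs : |∏ i : Fin 4, (c (p i).1 * a (p i).2)| = ∏ i : Fin 4, (c (p i).1 * |a (p i).2|) := by
      rw [Finset.abs_prod]
      apply Finset.prod_congr rfl
      intro i _
      rw [abs_mul, abs_of_nonneg (hc _ (hmem i).1).1]
    calc (∏ i : Fin 4, (c (p i).1 * a (p i).2)) *
          (∫ x in (0:ℝ)..1, ∏ i : Fin 4, Real.cos (2*π*(((p i).2 * n (p i).1 : ℕ))*x))
        ≤ |(∏ i : Fin 4, (c (p i).1 * a (p i).2)) *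
          (∫ x in (0:ℝ)..1, ∏ i : Fin 4, Real.cos (2*π*(((p i).2 * n (p i).1 : ℕ))*x))| :=
          le_abs_self _
      _ = (∏ i : Fin 4, (c (p i).1 * |a (p i).2|)) *
          |∫ x in (0:ℝ)..1, ∏ i : Fin 4, Real.cos (2*π*(((p i).2 * n (p i).1 : ℕ))*x)| := by
          rw [abs_mul, habs]
      _ ≤ (∏ i : Fin 4, (c (p i).1 * |a (p i).2|)) *
          ∑ s ∈ Fintype.piFinset (fun _ : Fin 4 => ({1, -1} : Finset ℤ)),
            (if freqZ n s p = 0 then (1:ℝ) else 0) :=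
          mul_le_mul_of_nonneg_left (abs_integral_cos_prod_le n p) hprodnn
      _ = ∑ s ∈ Fintype.piFinset (fun _ : Fin 4 => ({1, -1} : Finset ℤ)),
            (if freqZ n s p = 0 then (∏ i : Fin 4, (c (p i).1 * |a (p i).2|)) else 0) := by
          rw [Finset.mul_sum]
          apply Finset.sum_congr rfl
          intro s _
          rw [mul_ite, mul_one, mul_zero]
  refine le_trans (Finset.sum_le_sum key) ?_
  -- swap sums and reduce to per-sign bound
  rw [Finset.sum_comm]
  have persign : ∀ s ∈ Fintype.piFinset (fun _ : Fin 4 => ({1, -1} : Finset ℤ)),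
      ∑ p ∈ Fintype.piFinset (fun _ : Fin 4 => Δ ×ˢ Finset.Icc 1 d),
          (if freqZ n s p = 0 then (∏ i : Fin 4, (c (p i).1 * |a (p i).2|)) else 0)
        ≤ A^4 * (24 * (((2*L+1) * d^4 : ℝ) * (∑ k ∈ Δ, c k^2)^2)) := by
    intro s hsmem
    have hs : ∀ i, s i = 1 ∨ s i = -1 := by
      rw [Fintype.mem_piFinset] at hsmem
      intro i
      have := hsmem i
      rw [Finset.mem_insert, Finset.mem_singleton] at this
      exact this
    rw [← Finset.sum_filter]
    have step1 : ∑ p ∈ (Fintype.piFinset (fun _ : Fin 4 => Δ ×ˢ Finset.Icc 1 d)).filter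
        (fun p => freqZ n s p = 0), ∏ i : Fin 4, (c (p i).1 * |a (p i).2|)
        ≤ ∑ p ∈ (Fintype.piFinset (fun _ : Fin 4 => Δ ×ˢ Finset.Icc 1 d)).filter
        (fun p => freqZ n s p = 0), A^4 * ∏ i : Fin 4, c (p i).1 := by
      apply Finset.sum_le_sum
      intro p hp
      rw [Finset.mem_filter, Fintype.mem_piFinset] at hp
      have hmem : ∀ i, (p i).1 ∈ Δ ∧ (p i).2 ∈ Finset.Icc 1 d := by
        intro i
        have := hp.1 i
        rw [Finset.mem_product] at this
        exact this
      rw [Finset.prod_mul_distrib]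
      rw [mul_comm (A^4)]
      apply mul_le_mul_of_nonneg_left
      · calc ∏ i : Fin 4, |a (p i).2| ≤ ∏ _i : Fin 4, A :=
            Finset.prod_le_prod (fun i _ => abs_nonneg _) (fun i _ => hAj _ (hmem i).2)
          _ = A^4 := by rw [Finset.prod_const, Finset.card_univ, Fintype.card_fin]
      · exact Finset.prod_nonneg fun i _ => (hc _ (hmem i).1).1
    refine le_trans step1 ?_
    rw [← Finset.mul_sum]
    have := sign_sum_bound q hq n hpos hgap d L hL Δ c hc s hs
    exact mul_le_mul_of_nonneg_left this (by positivity)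
  refine le_trans (Finset.sum_le_sum persign) ?_
  rw [Finset.sum_const]
  have hcard : (Fintype.piFinset (fun _ : Fin 4 => ({1, -1} : Finset ℤ))).card = 16 := by
    rw [Fintype.card_piFinset]
    simp only [Finset.prod_const, Finset.card_univ, Fintype.card_fin]
    decide
  rw [hcard, nsmul_eq_mul]
  push_cast
  exact le_of_eq (by ring)
end

section
/- Let q > 1 and let (n_k)_{k≥1} be a sequence of positive integers with n_{k+1}/n_k ≥ q for all k, and let p(x) = Σ_{j=1}^d a_j cos(2πjx) be an even trigonometric polynomial of degree d. Then there is a constant C = C(p, q, d) with the following property: for every N ∈ ℕ, all β, η > 0, all disjoint sets A, B ⊆ {1, …, N}, and all weights (c_k)_{k≤N} with 0 ≤ c_k ≤ 1 such that c_k ≤ N^{−β−η} for every k ∈ A and c_k ≥ N^{−β} for every k ∈ B, one has |∫₀¹ (Σ_{k∈A} c_k p(n_k x))·(Σ_{k∈B} c_k p(n_k x)) dx| ≤ C·N^{−η}·Σ_{k∈B} c_k². -/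
open MeasureTheory Finset Real Set

lemma int_cos (c : ℝ) (m : ℤ) (hm : m ≠ 0) (hcm : c = m) :
    ∫ x in (0:ℝ)..1, Real.cos (2*π*c*x) = 0 := by
  subst hcm
  have hc : (2*π*(m:ℝ)) ≠ 0 := by
    have := Real.pi_pos
    intro h
    rcases mul_eq_zero.1 h with h | h
    · nlinarith
    · exact hm (by exact_mod_cast h)
  have h2 := intervalIntegral.integral_comp_mul_left (a:=(0:ℝ)) (b:=1) Real.cos hc
  simp only [mul_zero, mul_one] at h2
  rw [h2, integral_cos, Real.sin_zero]
  have h3 : Real.sin (2*π*m) = 0 := by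
    have := Real.sin_int_mul_pi (2*m)
    push_cast at this ⊢
    rw [show 2*π*(m:ℝ) = 2*(m:ℝ)*π by ring]
    exact this
  rw [h3]; simp

lemma int_cos_cos (A B : ℕ) (hA : 0 < A) (hB : 0 < B) :
    ∫ x in (0:ℝ)..1, Real.cos (2*π*A*x) * Real.cos (2*π*B*x)
      = if A = B then 1/2 else 0 := by
  have key : ∀ x : ℝ, Real.cos (2*π*A*x) * Real.cos (2*π*B*x)
      = (Real.cos (2*π*((A:ℝ)+B)*x) + Real.cos (2*π*((A:ℝ)-B)*x)) / 2 := by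
    intro x
    rw [show (2*π*((A:ℝ)+B)*x) = 2*π*A*x + 2*π*B*x by ring,
        show (2*π*((A:ℝ)-B)*x) = 2*π*A*x - 2*π*B*x by ring,
        Real.cos_add, Real.cos_sub]
    ring
  simp only [key]
  have i1 : IntervalIntegrable (fun x => Real.cos (2*π*((A:ℝ)+B)*x)) volume 0 1 :=
    (Real.continuous_cos.comp (by continuity)).intervalIntegrable _ _
  have i2 : IntervalIntegrable (fun x => Real.cos (2*π*((A:ℝ)-B)*x)) volume 0 1 :=
    (Real.continuous_cos.comp (by continuity)).intervalIntegrable _ _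
  rw [intervalIntegral.integral_div, intervalIntegral.integral_add i1 i2]
  rw [int_cos ((A:ℝ)+B) ((A:ℤ)+B) (by omega) (by push_cast; ring)]
  by_cases h : A = B
  · subst h
    have hone : ∀ x:ℝ, Real.cos (2*π*((A:ℝ)-A)*x) = 1 := by intro x; simp
    simp only [hone]
    simp
  · rw [int_cos ((A:ℝ)-B) ((A:ℤ)-B) (by omega) (by push_cast; ring)]
    simp [h]

lemma cont_tp (d : ℕ) (a : ℕ → ℝ) (m : ℕ) :
    Continuous (fun x : ℝ => trigPoly d a ((m:ℝ)*x)) := by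
  unfold trigPoly
  apply continuous_finset_sum
  intro j _
  exact continuous_const.mul (Real.continuous_cos.comp (by continuity))

lemma trig_int (d : ℕ) (a : ℕ → ℝ) (m m' : ℕ) (hm : 0 < m) (hm' : 0 < m') :
    ∫ x in (0:ℝ)..1, trigPoly d a ((m:ℝ)*x) * trigPoly d a ((m':ℝ)*x)
      = ∑ j ∈ Finset.Icc 1 d, ∑ j' ∈ Finset.Icc 1 d,
          a j * a j' * (if j*m = j'*m' then 1/2 else 0) := by
  have hfun : ∀ x : ℝ, trigPoly d a ((m:ℝ)*x) * trigPoly d a ((m':ℝ)*x)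
      = ∑ j ∈ Finset.Icc 1 d, ∑ j' ∈ Finset.Icc 1 d,
          (a j * a j') * (Real.cos (2*π*((j*m:ℕ):ℝ)*x) * Real.cos (2*π*((j'*m':ℕ):ℝ)*x)) := by
    intro x
    rw [trigPoly, trigPoly, Finset.sum_mul_sum]
    refine Finset.sum_congr rfl fun j _ => Finset.sum_congr rfl fun j' _ => ?_
    push_cast
    ring_nf
  simp only [hfun]
  rw [intervalIntegral.integral_finset_sum]
  · refine Finset.sum_congr rfl fun j hj => ?_
    rw [intervalIntegral.integral_finset_sum]
    · refine Finset.sum_congr rfl fun j' hj' => ?_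
      rw [intervalIntegral.integral_const_mul, int_cos_cos]
      · simp only [Finset.mem_Icc] at hj
        exact Nat.mul_pos (by omega) hm
      · simp only [Finset.mem_Icc] at hj'
        exact Nat.mul_pos (by omega) hm'
    · intro j' _
      exact (continuous_const.mul (((Real.continuous_cos.comp (by continuity))).mul
        (Real.continuous_cos.comp (by continuity)))).intervalIntegrable _ _
  · intro j _
    apply Continuous.intervalIntegrable
    apply continuous_finset_sum
    intro j' _
    exact continuous_const.mul ((Real.continuous_cos.comp (by continuity)).mul
      (Real.continuous_cos.comp (by continuity)))

lemma grow (q : ℝ) (hq : 1 < q) (n : ℕ → ℕ) (hpos : ∀ k, 0 < n k)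
    (hgap : ∀ k, q * (n k : ℝ) ≤ (n (k + 1) : ℝ)) :
    ∀ l m : ℕ, q ^ m * (n l : ℝ) ≤ (n (l + m) : ℝ) := by
  intro l m
  induction m with
  | zero => simp
  | succ m ih =>
    have hq0 : (0:ℝ) < q := by linarith
    calc q ^ (m+1) * (n l : ℝ) = q * (q ^ m * n l) := by ring
    _ ≤ q * (n (l + m) : ℝ) := by
        apply mul_le_mul_of_nonneg_left ih (le_of_lt hq0)
    _ ≤ (n (l + m + 1) : ℝ) := hgap (l + m)

lemma gap_bound (q : ℝ) (hq : 1 < q) (n : ℕ → ℕ) (hpos : ∀ k, 0 < n k)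
    (hgap : ∀ k, q * (n k : ℝ) ≤ (n (k + 1) : ℝ)) (d L : ℕ) (hL : (d:ℝ) < q ^ L)
    (k l j j' : ℕ) (hj : 1 ≤ j) (hj' : j' ≤ d) (h : j * n k = j' * n l) :
    k ≤ l + L := by
  by_contra hcon
  push_neg at hcon
  obtain ⟨m, rfl⟩ : ∃ m, k = l + m := ⟨k - l, by omega⟩
  have hLm : L ≤ m := by omega
  have h1 : q ^ m * (n l : ℝ) ≤ (n (l + m) : ℝ) := grow q hq n hpos hgap l m
  have h2 : (n (l + m) : ℝ) ≤ (d : ℝ) * n l := by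
    have : n (l + m) ≤ d * n l := by
      calc n (l + m) ≤ j * n (l + m) := Nat.le_mul_of_pos_left _ (by omega)
      _ = j' * n l := h
      _ ≤ d * n l := Nat.mul_le_mul_right _ hj'
    exact_mod_cast this
  have hnl : (0:ℝ) < n l := by exact_mod_cast hpos l
  have h3 : q ^ m ≤ (d : ℝ) := by
    have := h1.trans h2
    exact le_of_mul_le_mul_right this hnl
  have h4 : q ^ L ≤ q ^ m := pow_le_pow_right₀ (le_of_lt hq) hLm
  linarith

theorem decorrelation_of_separated_weight_classes
    (q : ℝ) (hq : 1 < q) (n : ℕ → ℕ) (hpos : ∀ k, 0 < n k)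
    (hgap : ∀ k, q * (n k : ℝ) ≤ (n (k + 1) : ℝ))
    (d : ℕ) (a : ℕ → ℝ) :
    ∃ C : ℝ, ∀ (N : ℕ) (β η : ℝ), 0 < β → 0 < η →
      ∀ (A B : Finset ℕ), A ⊆ Finset.Icc 1 N → B ⊆ Finset.Icc 1 N → Disjoint A B →
      ∀ c : ℕ → ℝ, (∀ k, 0 ≤ c k ∧ c k ≤ 1) →
        (∀ k ∈ A, c k ≤ (N : ℝ) ^ (-β - η)) →
        (∀ k ∈ B, (N : ℝ) ^ (-β) ≤ c k) →
        |∫ x in Set.Ico (0:ℝ) 1,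
            (∑ k ∈ A, c k * trigPoly d a ((n k : ℝ) * x)) *
              (∑ k ∈ B, c k * trigPoly d a ((n k : ℝ) * x))|
          ≤ C * (N : ℝ) ^ (-η) * ∑ k ∈ B, c k ^ 2 := by
  obtain ⟨L, hL⟩ := pow_unbounded_of_one_lt (d:ℝ) hq
  set M : ℝ := (∑ j ∈ Finset.Icc 1 d, |a j|)^2 with hMdef
  have hM0 : 0 ≤ M := sq_nonneg _
  refine ⟨(2*L+1 : ℕ) * M, ?_⟩
  intro N β η hβ hη A B hA hB hAB c hc hcA hcB
  rcases Nat.eq_zero_or_pos N with hN | hN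
  · subst hN
    have hA' : A = ∅ := Finset.subset_empty.mp (by simpa using hA)
    have hB' : B = ∅ := Finset.subset_empty.mp (by simpa using hB)
    subst hA'; subst hB'
    simp
  have hNpos : (0:ℝ) < N := by exact_mod_cast hN
  -- abbreviation for the pair integral
  set I : ℕ → ℕ → ℝ := fun k l =>
    ∫ x in (0:ℝ)..1, trigPoly d a ((n k : ℝ)*x) * trigPoly d a ((n l : ℝ)*x) with hIdef
  -- bound on |I k l|
  have Ibound : ∀ k l, |I k l| ≤ M := by
    intro k l
    rw [hIdef]
    simp only
    rw [trig_int d a (n k) (n l) (hpos k) (hpos l)]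
    calc |∑ j ∈ Finset.Icc 1 d, ∑ j' ∈ Finset.Icc 1 d,
            a j * a j' * (if j * n k = j' * n l then 1/2 else 0)|
        ≤ ∑ j ∈ Finset.Icc 1 d, ∑ j' ∈ Finset.Icc 1 d,
            |a j * a j' * (if j * n k = j' * n l then 1/2 else 0)| := by
          refine le_trans (Finset.abs_sum_le_sum_abs _ _) ?_
          exact Finset.sum_le_sum fun j _ => Finset.abs_sum_le_sum_abs _ _
      _ ≤ ∑ j ∈ Finset.Icc 1 d, ∑ j' ∈ Finset.Icc 1 d, |a j| * |a j'| := by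
          refine Finset.sum_le_sum fun j _ => Finset.sum_le_sum fun j' _ => ?_
          rw [abs_mul, abs_mul]
          have h1 : |if j * n k = j' * n l then (1:ℝ)/2 else 0| ≤ 1 := by
            split
            · rw [abs_of_nonneg (by norm_num : (0:ℝ) ≤ 1/2)]; norm_num
            · simp
          calc |a j| * |a j'| * |if j * n k = j' * n l then (1:ℝ)/2 else 0|
              ≤ |a j| * |a j'| * 1 := by
                apply mul_le_mul_of_nonneg_left h1 (by positivity)
            _ = |a j| * |a j'| := by ring
      _ = M := by rw [hMdef, sq, Finset.sum_mul_sum]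
  -- vanishing outside the window
  have Izero : ∀ k l, ¬ (l ≤ k + L ∧ k ≤ l + L) → I k l = 0 := by
    intro k l hkl
    rw [hIdef]
    simp only
    rw [trig_int d a (n k) (n l) (hpos k) (hpos l)]
    refine Finset.sum_eq_zero fun j hj => Finset.sum_eq_zero fun j' hj' => ?_
    simp only [Finset.mem_Icc] at hj hj'
    have hne : ¬ (j * n k = j' * n l) := by
      intro h
      apply hkl
      constructor
      · exact gap_bound q hq n hpos hgap d L hL l k j' j hj'.1 hj.2 h.symm
      · exact gap_bound q hq n hpos hgap d L hL k l j j' hj.1 hj'.2 h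
    simp [hne]
  -- convert the set integral to an interval integral
  have hconv : ∫ x in Set.Ico (0:ℝ) 1,
        (∑ k ∈ A, c k * trigPoly d a ((n k : ℝ) * x)) *
          (∑ k ∈ B, c k * trigPoly d a ((n k : ℝ) * x))
      = ∫ x in (0:ℝ)..1,
        (∑ k ∈ A, c k * trigPoly d a ((n k : ℝ) * x)) *
          (∑ k ∈ B, c k * trigPoly d a ((n k : ℝ) * x)) := by
    rw [MeasureTheory.integral_Ico_eq_integral_Ioo,
        intervalIntegral.integral_of_le (zero_le_one),
        MeasureTheory.integral_Ioc_eq_integral_Ioo]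
  -- expand the integral as a double sum
  have key : ∫ x in (0:ℝ)..1,
        (∑ k ∈ A, c k * trigPoly d a ((n k : ℝ) * x)) *
          (∑ k ∈ B, c k * trigPoly d a ((n k : ℝ) * x))
      = ∑ k ∈ A, ∑ l ∈ B, (c k * c l) * I k l := by
    have hfun : ∀ x : ℝ,
        (∑ k ∈ A, c k * trigPoly d a ((n k : ℝ) * x)) *
          (∑ k ∈ B, c k * trigPoly d a ((n k : ℝ) * x))
        = ∑ k ∈ A, ∑ l ∈ B, (c k * c l) *
            (trigPoly d a ((n k : ℝ)*x) * trigPoly d a ((n l : ℝ)*x)) := by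
      intro x
      rw [Finset.sum_mul_sum]
      exact Finset.sum_congr rfl fun k _ => Finset.sum_congr rfl fun l _ => by ring
    simp only [hfun]
    rw [intervalIntegral.integral_finset_sum]
    · refine Finset.sum_congr rfl fun k _ => ?_
      rw [intervalIntegral.integral_finset_sum]
      · exact Finset.sum_congr rfl fun l _ => intervalIntegral.integral_const_mul _ _
      · intro l _
        exact (continuous_const.mul ((cont_tp d a (n k)).mul
          (cont_tp d a (n l)))).intervalIntegrable _ _
    · intro k _
      apply Continuous.intervalIntegrable
      apply continuous_finset_sum
      intro l _
      exact continuous_const.mul ((cont_tp d a (n k)).mul (cont_tp d a (n l)))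
  rw [hconv, key]
  -- per-l bound
  have hNbe : (N:ℝ) ^ (-β-η) = (N:ℝ) ^ (-η) * (N:ℝ) ^ (-β) := by
    rw [← Real.rpow_add hNpos]; ring_nf
  have hNeta : (0:ℝ) ≤ (N:ℝ) ^ (-η) := Real.rpow_nonneg (le_of_lt hNpos) _
  have perl : ∀ l ∈ B, ∑ k ∈ A, |(c k * c l) * I k l|
      ≤ ((2*L+1 : ℕ) : ℝ) * M * ((N:ℝ) ^ (-η) * c l ^ 2) := by
    intro l hl
    have hcl0 : 0 ≤ c l := (hc l).1
    have hwin : ∑ k ∈ A, |(c k * c l) * I k l|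
        = ∑ k ∈ A ∩ Finset.Icc (l-L) (l+L), |(c k * c l) * I k l| := by
      refine (Finset.sum_subset (Finset.inter_subset_left) ?_).symm
      intro x hx hnx
      have hxw : x ∉ Finset.Icc (l-L) (l+L) := by
        intro hw; exact hnx (Finset.mem_inter.mpr ⟨hx, hw⟩)
      simp only [Finset.mem_Icc] at hxw
      have : I x l = 0 := Izero x l (by omega)
      simp [this]
    rw [hwin]
    have hper : ∀ k ∈ A ∩ Finset.Icc (l-L) (l+L),
        |(c k * c l) * I k l| ≤ (N:ℝ) ^ (-β-η) * c l * M := by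
      intro k hk
      have hkA : k ∈ A := Finset.mem_of_mem_inter_left hk
      have hck : 0 ≤ c k := (hc k).1
      rw [abs_mul, abs_mul, abs_of_nonneg hck, abs_of_nonneg hcl0]
      have h1 : c k * c l * |I k l| ≤ (N:ℝ)^(-β-η) * c l * |I k l| := by
        apply mul_le_mul_of_nonneg_right (mul_le_mul_of_nonneg_right (hcA k hkA) hcl0)
          (abs_nonneg _)
      refine h1.trans ?_
      apply mul_le_mul_of_nonneg_left (Ibound k l)
      have : (0:ℝ) ≤ (N:ℝ)^(-β-η) := Real.rpow_nonneg (le_of_lt hNpos) _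
      positivity
    calc ∑ k ∈ A ∩ Finset.Icc (l-L) (l+L), |(c k * c l) * I k l|
        ≤ (A ∩ Finset.Icc (l-L) (l+L)).card • ((N:ℝ) ^ (-β-η) * c l * M) :=
          Finset.sum_le_card_nsmul _ _ _ hper
      _ = ((A ∩ Finset.Icc (l-L) (l+L)).card : ℝ) * ((N:ℝ) ^ (-β-η) * c l * M) := by
          rw [nsmul_eq_mul]
      _ ≤ ((2*L+1 : ℕ) : ℝ) * ((N:ℝ) ^ (-β-η) * c l * M) := by
          apply mul_le_mul_of_nonneg_right
          · have hcard : (A ∩ Finset.Icc (l-L) (l+L)).card ≤ 2*L+1 := by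
              refine le_trans (Finset.card_le_card (Finset.inter_subset_right)) ?_
              rw [Nat.card_Icc]; omega
            exact_mod_cast hcard
          · have h0 : (0:ℝ) ≤ (N:ℝ)^(-β-η) := Real.rpow_nonneg (le_of_lt hNpos) _
            positivity
      _ ≤ ((2*L+1 : ℕ) : ℝ) * M * ((N:ℝ) ^ (-η) * c l ^ 2) := by
          have h2 : (N:ℝ) ^ (-β-η) * c l ≤ (N:ℝ) ^ (-η) * c l ^ 2 := by
            rw [hNbe, sq]
            calc (N:ℝ)^(-η) * (N:ℝ)^(-β) * c l ≤ (N:ℝ)^(-η) * (c l * c l) := by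
                  rw [mul_assoc]
                  apply mul_le_mul_of_nonneg_left
                    (mul_le_mul_of_nonneg_right (hcB l hl) hcl0) hNeta
              _ = (N:ℝ)^(-η) * (c l * c l) := rfl
          calc ((2*L+1 : ℕ) : ℝ) * ((N:ℝ) ^ (-β-η) * c l * M)
              = ((2*L+1 : ℕ) : ℝ) * M * ((N:ℝ) ^ (-β-η) * c l) := by ring
            _ ≤ ((2*L+1 : ℕ) : ℝ) * M * ((N:ℝ) ^ (-η) * c l ^ 2) := by
                apply mul_le_mul_of_nonneg_left h2 (by positivity)
  calc |∑ k ∈ A, ∑ l ∈ B, (c k * c l) * I k l|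
      ≤ ∑ k ∈ A, ∑ l ∈ B, |(c k * c l) * I k l| := by
        refine le_trans (Finset.abs_sum_le_sum_abs _ _) ?_
        exact Finset.sum_le_sum fun k _ => Finset.abs_sum_le_sum_abs _ _
    _ = ∑ l ∈ B, ∑ k ∈ A, |(c k * c l) * I k l| := Finset.sum_comm
    _ ≤ ∑ l ∈ B, ((2*L+1 : ℕ) : ℝ) * M * ((N:ℝ) ^ (-η) * c l ^ 2) :=
        Finset.sum_le_sum perl
    _ = ((2*L+1 : ℕ) : ℝ) * M * ((N:ℝ) ^ (-η)) * ∑ l ∈ B, c l ^ 2 := by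
        rw [Finset.mul_sum]
        exact Finset.sum_congr rfl fun l _ => by ring
end
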